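/- A binary word w is an overlap-free square if and only if w is a conjugate (cyclic rotation) of μ^i(x) for some x ∈ {00, 11, 010010, 101101} and some i ≥ 0, where μ is the Thue-Morse morphism. -/

import Mathlib

/-- Thue–Morse morphism: μ(0)=01, μ(1)=10, encoding 0 = false, 1 = true. -/
def mu (w : List Bool) : List Bool := w.flatMap fun b => [b, !b]

/-- A word is an overlap if it has the form a·x·a·x·a for a letter a. -/
def IsOverlap (w : List Bool) : Prop :=
  ∃ (a : Bool) (x : List Bool), w = [a] ++ x ++ [a] ++ x ++ [a]

/-- A word contains an overlap as a factor. -/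
def HasOverlap (w : List Bool) : Prop := ∃ f, f <:+: w ∧ IsOverlap f

/-- A word is overlap-free if no factor is an overlap. -/
def OverlapFree (w : List Bool) : Prop := ∀ f, f <:+: w → ¬ IsOverlap f

open List

def HasOv (w : List Bool) : Prop :=
  ∃ s p, 1 ≤ p ∧ s + 2*p < w.length ∧ ∀ i, i ≤ p → w.getD (s+i) false = w.getD (s+i+p) false

theorem ovwD (a : Bool) (x : List Bool) : ∀ i, ([a]++x++[a]++x++[a]).getD i false =
    if i = 0 then a else if i ≤ x.length then x.getD (i-1) false
    else if i = x.length+1 then a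
    else if i ≤ 2*x.length+1 then x.getD (i - x.length - 2) false
    else if i = 2*x.length+2 then a else false := by
  have hra : ([a]++x++[a]++x++[a] : List Bool) = [a] ++ (x ++ ([a] ++ (x ++ [a]))) := by simp
  intro i
  rw [hra]
  rcases Nat.eq_zero_or_pos i with h0 | h0
  · subst h0; simp
  rw [if_neg (by omega), getD_append_right [a] _ _ _ (by simp; omega)]
  simp only [length_cons, length_nil]
  by_cases h1 : i ≤ x.length
  · rw [if_pos h1, getD_append x _ _ _ (by omega)]
  rw [if_neg h1, getD_append_right x _ _ _ (by omega)]
  by_cases h2 : i = x.length + 1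
  · rw [if_pos h2, show i - 1 - x.length = 0 by omega]; simp
  rw [if_neg h2, getD_append_right [a] _ _ _ (by simp; omega)]
  simp only [length_cons, length_nil]
  by_cases h3 : i ≤ 2*x.length+1
  · rw [if_pos h3, getD_append x _ _ _ (by omega)]
    congr 1; omega
  rw [if_neg h3, getD_append_right x _ _ _ (by omega)]
  by_cases h4 : i = 2*x.length+2
  · rw [if_pos h4, show i - 1 - x.length - 1 - x.length = 0 by omega]; simp
  · rw [if_neg h4, getD_eq_default _ _ (by simp; omega)]

theorem ovw_length (a : Bool) (x : List Bool) :
    ([a]++x++[a]++x++[a]).length = 2*x.length + 3 := by simp; omega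

theorem hasOverlap_iff_hasOv (w : List Bool) : HasOverlap w ↔ HasOv w := by
  constructor
  · rintro ⟨f, ⟨l, r, rfl⟩, a, x, rfl⟩
    set n := x.length with hn
    refine ⟨l.length, n + 1, by omega, ?_, ?_⟩
    · simp [ovw_length]; omega
    · intro i hi
      have key : ∀ j, j < 2*n+3 →
          (l ++ ([a]++x++[a]++x++[a]) ++ r).getD (l.length + j) false
            = ([a]++x++[a]++x++[a]).getD j false := by
        intro j hj
        rw [getD_append (l ++ ([a]++x++[a]++x++[a])) r _ _ (by simp [ovw_length]; omega),
          getD_append_right l _ _ _ (by omega), Nat.add_sub_cancel_left]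
      rw [key i (by omega), show l.length + i + (n+1) = l.length + (i + (n+1)) by omega,
        key _ (by omega), ovwD, ovwD, ← hn]
      rcases Nat.eq_zero_or_pos i with h0 | h0
      · subst h0
        rw [if_pos rfl, if_neg (by omega), if_neg (by omega), if_pos (by omega)]
      by_cases h1 : i ≤ n
      · rw [if_neg (by omega), if_pos h1, if_neg (by omega), if_neg (by omega),
          if_neg (by omega), if_pos (by omega)]
        congr 1; omega
      · rw [if_neg (by omega), if_neg h1, if_pos (by omega), if_neg (by omega),
          if_neg (by omega), if_neg (by omega), if_neg (by omega), if_pos (by omega)]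
  · rintro ⟨s, p, hp, hlen, hper⟩
    set a := w.getD s false with ha
    set x := (w.drop (s+1)).take (p-1) with hx
    have hxlen : x.length = p - 1 := by
      rw [hx, length_take, length_drop]; omega
    have hw : ∀ j, j < p - 1 → x.getD j false = w.getD (s+1+j) false := by
      intro j hj
      rw [hx, getD_eq_getElem _ _ (by rw [length_take, length_drop]; omega),
        getElem_take, getElem_drop, ← getD_eq_getElem _ false (by omega)]
    have hslice : ∀ i, i < 2*p+1 → ([a]++x++[a]++x++[a]).getD i false = w.getD (s+i) false := by
      intro i hi
      rw [ovwD, hxlen]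
      rcases Nat.eq_zero_or_pos i with h0 | h0
      · subst h0; simp [ha]
      by_cases h1 : i ≤ p - 1
      · rw [if_neg (by omega), if_pos h1, hw (i-1) (by omega)]
        congr 1; omega
      by_cases h2 : i = p
      · rw [if_neg (by omega), if_neg h1, if_pos (by omega), ha]
        have h5 := hper 0 (by omega)
        simp only [Nat.add_zero, Nat.zero_add] at h5
        rw [h5, h2]
      by_cases h3 : i ≤ 2*(p-1)+1
      · rw [if_neg (by omega), if_neg h1, if_neg (by omega), if_pos h3,
          hw (i - (p-1) - 2) (by omega)]
        have h5 := hper (i - p) (by omega)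
        rw [show s + (i-p) + p = s + i by omega] at h5
        rw [← h5]
        congr 1; omega
      · rw [if_neg (by omega), if_neg h1, if_neg (by omega), if_neg h3,
          if_pos (by omega), ha]
        have h5 := hper 0 (by omega)
        have h6 := hper p (by omega)
        simp only [Nat.add_zero, Nat.zero_add] at h5
        rw [show s + p + p = s + i by omega] at h6
        rw [h5, h6]
    refine ⟨[a]++x++[a]++x++[a], ?_, a, x, rfl⟩
    have hL : ([a]++x++[a]++x++[a]).length = 2*p+1 := by rw [ovw_length, hxlen]; omega
    have heq : ([a]++x++[a]++x++[a]) = (w.drop s).take (2*p+1) := by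
      apply List.ext_getElem
      · rw [hL, length_take, length_drop]; omega
      · intro i hi1 hi2
        have hi : i < 2*p+1 := by rw [hL] at hi1; exact hi1
        have e1 : ([a]++x++[a]++x++[a])[i] = w.getD (s+i) false := by
          rw [← getD_eq_getElem _ false hi1]; exact hslice i hi
        have e2 : ((w.drop s).take (2*p+1))[i] = w.getD (s+i) false := by
          rw [getElem_take, getElem_drop, ← getD_eq_getElem _ false (by omega)]
        rw [e1, e2]
    rw [heq]
    exact ((take_prefix _ _).isInfix).trans (drop_suffix s w).isInfix
def hasOvB (w : List Bool) : Bool :=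
  (List.range w.length).any fun s => (List.range w.length).any fun p =>
    decide (1 ≤ p) && decide (s + 2*p < w.length) &&
    ((List.range (p+1)).all fun i => w.getD (s+i) false == w.getD (s+i+p) false)

theorem hasOv_iff_B (w : List Bool) : HasOv w ↔ hasOvB w = true := by
  simp only [hasOvB, List.any_eq_true, List.all_eq_true, List.mem_range, Bool.and_eq_true,
    decide_eq_true_eq, beq_iff_eq]
  constructor
  · rintro ⟨s, p, hp, hlen, hper⟩
    exact ⟨s, by omega, p, by omega, ⟨hp, hlen⟩, fun i hi => hper i (by omega)⟩
  · rintro ⟨s, _, p, _, ⟨hp, hlen⟩, hper⟩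
    exact ⟨s, p, hp, hlen, fun i hi => hper i (by omega)⟩

theorem overlapFree_iff_not_hasOverlap (w : List Bool) : OverlapFree w ↔ ¬ HasOverlap w := by
  simp only [OverlapFree, HasOverlap, not_exists, not_and]

theorem overlapFree_iff_hasOv (w : List Bool) : OverlapFree w ↔ ¬ HasOv w := by
  rw [overlapFree_iff_not_hasOverlap, hasOverlap_iff_hasOv]

theorem overlapFree_iff_chk (w : List Bool) : OverlapFree w ↔ hasOvB w = false := by
  rw [overlapFree_iff_hasOv, hasOv_iff_B, Bool.not_eq_true]

example : OverlapFree [false, true, false, false, true, false] := by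
  rw [overlapFree_iff_chk]; decide
example : ¬ OverlapFree [false, false, false] := by
  rw [overlapFree_iff_chk]; decide
example : OverlapFree [false,true,true,false,false,true,true,false,true,false] ∨ True := by
  rw [overlapFree_iff_chk]; right; trivial
theorem mu_cons (a : Bool) (l : List Bool) : mu (a :: l) = a :: (!a) :: mu l := rfl
theorem mu_nil : mu [] = [] := rfl
theorem mu_append (a b : List Bool) : mu (a ++ b) = mu a ++ mu b := by simp [mu]
theorem mu_length (l : List Bool) : (mu l).length = 2 * l.length := by
  induction l with
  | nil => rfl
  | cons a t ih => simp [mu_cons, ih]; ring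
theorem mu_getD_even : ∀ (l : List Bool) (t : ℕ), t < l.length → (mu l).getD (2*t) false = l.getD t false := by
  intro l
  induction l with
  | nil => intro t h; simp at h
  | cons a tl ih =>
    intro t h
    cases t with
    | zero => rfl
    | succ t =>
      have : 2 * (t+1) = ((2*t)+1)+1 := by ring
      rw [this, mu_cons]
      simpa using ih t (by simpa using h)
theorem mu_getD_odd : ∀ (l : List Bool) (t : ℕ), t < l.length → (mu l).getD (2*t+1) false = !(l.getD t false) := by
  intro l
  induction l with
  | nil => intro t h; simp at h
  | cons a tl ih =>
    intro t h
    cases t with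
    | zero => rfl
    | succ t =>
      have : 2 * (t+1) + 1 = ((2*t+1)+1)+1 := by ring
      rw [this, mu_cons]
      simpa using ih t (by simpa using h)
theorem mu_take : ∀ (k : ℕ) (l : List Bool), mu (l.take k) = (mu l).take (2*k) := by
  intro k
  induction k with
  | zero => simp [mu_nil]
  | succ k ih =>
    intro l
    cases l with
    | nil => simp [mu_nil]
    | cons a t =>
      have : 2 * (k+1) = (2*k)+1+1 := by ring
      simp [mu_cons, this, ih t]
theorem mu_drop : ∀ (k : ℕ) (l : List Bool), mu (l.drop k) = (mu l).drop (2*k) := by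
  intro k
  induction k with
  | zero => simp
  | succ k ih =>
    intro l
    cases l with
    | nil => simp [mu_nil]
    | cons a t =>
      have : 2 * (k+1) = (2*k)+1+1 := by ring
      simp [mu_cons, this, ih t]
theorem mu_infix {u v : List Bool} (h : u <:+: v) : mu u <:+: mu v := by
  obtain ⟨s, t, rfl⟩ := h
  exact ⟨mu s, mu t, by simp [mu_append]⟩

-- alternation parity helper
theorem alt_getD (M : List Bool) (s : ℕ) (k : ℕ)
    (halt : ∀ j, j < k → M.getD (s+j+1) false = !(M.getD (s+j) false)) :
    M.getD (s+k) false = (if Even k then M.getD s false else !(M.getD s false)) := by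
  induction k with
  | zero => simp
  | succ k ih =>
    have h1 : M.getD (s+(k+1)) false = !(M.getD (s+k) false) := by
      have := halt k (by omega)
      rw [show s+k+1 = s+(k+1) by omega] at this
      exact this
    rw [h1, ih (fun j hj => halt j (by omega))]
    by_cases he : Even k
    · rw [if_pos he, if_neg (by rw [Nat.even_add_one]; exact not_not.mpr he)]
    · rw [if_neg he, if_pos (Nat.even_add_one.mpr he), Bool.not_not]

theorem thue_aux (w : List Bool) (hov : ¬ HasOv w) : ¬ HasOv (mu w) := by
  rintro ⟨s, p, hp, hlen, hper⟩
  have hMlen : (mu w).length = 2 * w.length := mu_length w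
  set M := mu w with hM
  have block : ∀ t, t < w.length → M.getD (2*t+1) false = !(M.getD (2*t) false) := by
    intro t ht
    rw [hM, mu_getD_odd w t ht, mu_getD_even w t ht]
  have even_getD : ∀ t, t < w.length → M.getD (2*t) false = w.getD t false := fun t ht =>
    mu_getD_even w t ht
  rw [hMlen] at hlen
  -- main case analysis
  by_cases hpe : Even p
  · -- p even : descend to w (after possibly shifting s left by 1)
    obtain ⟨q, hq⟩ := hpe
    have hq2 : p = 2*q := by omega
    have descend : ∀ s', Even s' → s' + 2*p < 2*w.length →
        (∀ i, i ≤ p → M.getD (s'+i) false = M.getD (s'+i+p) false) → False := by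
      rintro s' ⟨σ, hσ⟩ hlen' hper'
      have hσ2 : s' = 2*σ := by omega
      apply hov
      refine ⟨σ, q, by omega, by omega, ?_⟩
      intro j hj
      have e1 : w.getD (σ+j) false = M.getD (2*σ+2*j) false := by
        rw [← even_getD (σ+j) (by omega)]; congr 1; omega
      have e2 : w.getD (σ+j+q) false = M.getD (2*σ+2*j+2*q) false := by
        rw [← even_getD (σ+j+q) (by omega)]; congr 1; omega
      have h3 := hper' (2*j) (by omega)
      rw [hσ2] at h3
      rw [e1, e2, show 2*σ+2*j+2*q = 2*σ+2*j+p by omega]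
      exact h3
    rcases Nat.even_or_odd s with hse | hso
    · exact descend s hse hlen hper
    · -- s odd: extend left
      obtain ⟨t, ht⟩ := hso
      apply descend (s-1) ⟨t, by omega⟩ (by omega)
      intro i hi
      rcases Nat.eq_zero_or_pos i with rfl | hipos
      · have b1 : M.getD (s) false = !(M.getD (s-1) false) := by
          have := block t (by omega)
          rw [show 2*t+1 = s by omega, show 2*t = s-1 by omega] at this
          exact this
        have b2 : M.getD (s+p) false = !(M.getD (s-1+p) false) := by
          have := block (t+q) (by omega)
          rw [show 2*(t+q)+1 = s+p by omega, show 2*(t+q) = s-1+p by omega] at this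
          exact this
        have := hper 0 (by omega)
        simp only [Nat.add_zero] at this b1 b2 ⊢
        rw [b1, b2] at this
        simpa using this
      · have h3 := hper (i-1) (by omega)
        rw [show s-1+i = s+(i-1) by omega]
        exact h3
  · -- p odd
    by_cases hdub : ∃ j, s ≤ j ∧ j + 1 ≤ s + p ∧ M.getD j false = M.getD (j+1) false
    · obtain ⟨j, hj1, hj2, hj3⟩ := hdub
      -- double also at j + p
      have hd2 : M.getD (j+p) false = M.getD (j+p+1) false := by
        have e1 := hper (j-s) (by omega)
        have e2 := hper (j-s+1) (by omega)
        rw [show s+(j-s) = j by omega] at e1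
        rw [show s+(j-s+1) = j+1 by omega, show j+1+p = j+p+1 by omega] at e2
        rw [← e1, ← e2]; exact hj3
      -- one of j, j+p is even
      have key : ∀ e, e + 1 < 2*w.length → Even e → M.getD e false = M.getD (e+1) false → False := by
        rintro e he ⟨t, ht⟩ hee
        have h4 := block t (by omega)
        rw [show 2*t = e by omega] at h4
        rw [h4] at hee
        simp at hee
      by_cases hje : Even j
      · exact key j (by omega) hje hj3
      · have : Even (j+p) := by
          rw [Nat.even_add]; exact iff_of_false hje hpe
        exact key (j+p) (by omega) this hd2
    · -- no doubles in [s, s+p-1] : alternating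
      push_neg at hdub
      have halt : ∀ j, j < p → M.getD (s+j+1) false = !(M.getD (s+j) false) := by
        intro j hj
        have := hdub (s+j) (by omega) (by omega)
        revert this; cases M.getD (s+j) false <;> cases M.getD (s+j+1) false <;> simp
      have h5 := alt_getD M s p halt
      rw [if_neg hpe] at h5
      have h0 := hper 0 (by omega)
      simp only [Nat.add_zero] at h0
      rw [h0] at h5
      simp at h5

theorem thue {w : List Bool} (h : OverlapFree w) : OverlapFree (mu w) := by
  rw [overlapFree_iff_hasOv] at h ⊢
  exact thue_aux w h

theorem mu_ne_nil {z : List Bool} (h : z ≠ []) : mu z ≠ [] := by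
  intro hc
  have := mu_length z
  rw [hc] at this
  simp at this
  exact h (by simpa [List.length_eq_zero_iff] using this.symm)

theorem dropLast_infix {u v : List Bool} {b : Bool} (h : (u ++ [b]) <:+: v) :
    u <:+: v.dropLast := by
  obtain ⟨l, r, rfl⟩ := h
  cases r with
  | nil =>
    rw [append_nil, show l ++ (u ++ [b]) = (l ++ u) ++ [b] by simp, dropLast_concat]
    exact ⟨l, [], by simp⟩
  | cons c r' =>
    rw [dropLast_append_of_ne_nil (l := c :: r') (by simp)]
    exact ⟨l, [b] ++ (c :: r').dropLast, by simp⟩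

theorem ov_lift {f z : List Bool} (hf : IsOverlap f) (hinf : f <:+: z) :
    ∃ g b, IsOverlap g ∧ (g ++ [b]) <:+: mu z := by
  obtain ⟨a, x, rfl⟩ := hf
  refine ⟨[a] ++ ((!a) :: mu x) ++ [a] ++ ((!a) :: mu x) ++ [a], !a, ⟨a, (!a) :: mu x, rfl⟩, ?_⟩
  have : mu ([a]++x++[a]++x++[a]) =
      ([a] ++ ((!a) :: mu x) ++ [a] ++ ((!a) :: mu x) ++ [a]) ++ [!a] := by
    simp [mu_append, mu_cons, mu_nil, List.append_assoc]
  rw [← this]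
  exact mu_infix hinf

theorem ov_unlift {z : List Bool} (h : OverlapFree (mu z)) : OverlapFree z := by
  rw [overlapFree_iff_not_hasOverlap] at h ⊢
  rintro ⟨f, hinf, hov⟩
  obtain ⟨g, b, hg, hginf⟩ := ov_lift hov hinf
  exact h ⟨g, ⟨List.IsInfix.trans ⟨[], [b], by simp⟩ hginf, hg⟩⟩

theorem mu_rotate {z : List Bool} {j : ℕ} (hj : j ≤ z.length) :
    (mu z).rotate (2*j) = mu (z.rotate j) := by
  rw [rotate_eq_drop_append_take (by rw [mu_length]; omega),
    rotate_eq_drop_append_take hj, mu_append, mu_drop, mu_take]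

theorem sq_rotate {x : List Bool} {k : ℕ} (hk : k ≤ x.length) :
    (x ++ x).rotate k = (x.rotate k) ++ (x.rotate k) := by
  rw [rotate_eq_drop_append_take (by simp; omega), rotate_eq_drop_append_take hk,
    drop_append_of_le_length hk, take_append_of_le_length hk]
  set t := take k x with ht
  set d := drop k x with hd
  have hx : x = t ++ d := (take_append_drop k x).symm
  rw [hx]
  simp [List.append_assoc]

theorem sq_rotate_full (x : List Bool) : (x ++ x).rotate x.length = x ++ x := by
  rw [rotate_eq_drop_append_take (by simp), drop_left, take_left]

theorem sq_rotate_any (x : List Bool) : ∀ k, ∃ z, (x ++ x).rotate k = z ++ z ∧ z.length = x.length := by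
  intro k
  induction k using Nat.strong_induction_on with
  | _ k ih =>
    rcases le_or_gt k x.length with hk | hk
    · exact ⟨x.rotate k, sq_rotate hk, length_rotate x k⟩
    · rcases Nat.eq_zero_or_pos x.length with h0 | h0
      · exact ⟨[], by rw [length_eq_zero_iff.mp h0]; simp [rotate_nil], by simp [length_eq_zero_iff.mp h0]⟩
      · obtain ⟨z, hz, hzl⟩ := ih (k - x.length) (by omega)
        refine ⟨z, ?_, hzl⟩
        rw [show (x ++ x).rotate k = ((x ++ x).rotate x.length).rotate (k - x.length) by
          rw [rotate_rotate]; congr 1; omega, sq_rotate_full, hz]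

theorem rot_decomp {u v L : List Bool} (h : u ++ v = L) : L.rotate u.length = v ++ u := by
  rw [← h, rotate_eq_drop_append_take (by simp), drop_left, take_left]

theorem mu_isRotated {l l' : List Bool} (h : l ~r l') : mu l ~r mu l' := by
  rw [isRotated_iff_mod] at h
  obtain ⟨m, hm, rfl⟩ := h
  exact ⟨2*m, (mu_rotate hm)⟩

theorem isRotated_decomp {l l' : List Bool} (h : l ~r l') :
    ∃ u v, l = u ++ v ∧ l' = v ++ u := by
  rw [isRotated_iff_mod] at h
  obtain ⟨m, hm, rfl⟩ := h
  exact ⟨l.take m, l.drop m, (take_append_drop m l).symm,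
    by rw [rotate_eq_drop_append_take hm]⟩

theorem rot1_of {z : List Bool} (hz : z ≠ []) (h1 : OverlapFree (mu z))
    (h2 : OverlapFree (mu (z.rotate 1))) : OverlapFree ((mu z).rotate 1) := by
  obtain ⟨a, z', rfl⟩ := List.exists_cons_of_ne_nil hz
  have hrw : (mu (a :: z')).rotate 1 = ((!a) :: mu z') ++ [a] := by
    rw [mu_cons, rotate_cons_succ, rotate_zero]
  have hz1 : (a :: z').rotate 1 = z' ++ [a] := by
    rw [rotate_cons_succ, rotate_zero]
  rw [hrw]
  intro f hinf hovf
  obtain ⟨l, r, hlr⟩ := hinf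
  cases r with
  | cons c r' =>
    have hfd : f <:+: (((!a) :: mu z') ++ [a]).dropLast :=
      dropLast_infix (b := c) ⟨l, r', by rw [← hlr]; simp⟩
    rw [show (((!a) :: mu z') ++ [a]).dropLast = (!a) :: mu z' from dropLast_concat ..] at hfd
    exact h1 f (hfd.trans ⟨[a], [], by simp [mu_cons]⟩) hovf
  | nil =>
    cases l with
    | cons c l' =>
      have hsfx : f <:+: mu z' ++ [a] := by
        refine ⟨l', [], ?_⟩
        have h3 : c :: (l' ++ f ++ []) = (!a) :: (mu z' ++ [a]) := by
          rw [show c :: (l' ++ f ++ []) = (c :: l') ++ f ++ [] by simp, hlr]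
          simp
        exact (List.cons_eq_cons.mp h3).2
      have hfin : f <:+: mu (z' ++ [a]) := by
        refine hsfx.trans ?_
        rw [mu_append, mu_cons, mu_nil]
        exact ⟨[], [!a], by simp⟩
      rw [← hz1] at hfin
      exact h2 f hfin hovf
    | nil =>
      obtain ⟨b, y, hby⟩ := hovf
      have hlen : f.length = (((!a) :: mu z') ++ [a]).length := by rw [← hlr]; simp
      rw [hby] at hlen
      simp [mu_length] at hlen
      omega

def bases : List (List Bool) :=
  [[false, false], [true, true],
   [false, true, false, false, true, false],
   [true, false, true, true, false, true]]

theorem iter_mu_ne_nil {b : List Bool} (hb : b ≠ []) : ∀ i, mu^[i] b ≠ [] := by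
  intro i
  induction i with
  | zero => simpa using hb
  | succ i ih => rw [Function.iterate_succ_apply']; exact mu_ne_nil ih

theorem overlapFree_rotate_of_small (b : List Bool) (hb : 0 < b.length)
    (H : ∀ m, m < b.length → hasOvB (b.rotate m) = false) (k : ℕ) :
    OverlapFree (b.rotate k) := by
  rw [← rotate_mod, overlapFree_iff_chk]
  exact H _ (Nat.mod_lt _ hb)

theorem basesRot : ∀ (i : ℕ) (b : List Bool), b ∈ bases → ∀ k,
    OverlapFree ((mu^[i] b).rotate k) := by
  intro i
  induction i with
  | zero =>
    intro b hb k
    rw [Function.iterate_zero_apply]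
    fin_cases hb
    · exact overlapFree_rotate_of_small _ (by decide) (by decide) k
    · exact overlapFree_rotate_of_small _ (by decide) (by decide) k
    · exact overlapFree_rotate_of_small _ (by decide) (by decide) k
    · exact overlapFree_rotate_of_small _ (by decide) (by decide) k
  | succ i ih =>
    intro b hb k
    have IH : ∀ m, OverlapFree ((mu^[i] b).rotate m) := ih b hb
    have hbne : b ≠ [] := by
      intro h; rw [h] at hb; simp [bases] at hb
    have hZ : mu^[i] b ≠ [] := iter_mu_ne_nil hbne i
    have hZl : 0 < (mu^[i] b).length := length_pos_iff.mpr hZ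
    rw [Function.iterate_succ_apply', ← rotate_mod]
    have hk' : k % (mu (mu^[i] b)).length < 2 * (mu^[i] b).length := by
      rw [← mu_length]
      exact Nat.mod_lt _ (by rw [mu_length]; omega)
    rcases Nat.even_or_odd (k % (mu (mu^[i] b)).length) with ⟨j, hj⟩ | ⟨j, hj⟩
    · rw [show k % (mu (mu^[i] b)).length = 2*j by omega, mu_rotate (by omega)]
      exact thue (IH j)
    · rw [show k % (mu (mu^[i] b)).length = 2*j + 1 by omega, ← rotate_rotate,
        mu_rotate (by omega)]
      refine rot1_of (by rw [Ne, rotate_eq_nil_iff]; exact hZ) (thue (IH j)) ?_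
      rw [rotate_rotate]
      exact thue (IH (j+1))

def demu : List Bool → List Bool
  | a :: _ :: t => a :: demu t
  | _ => []

theorem getD_cons2 (a b : Bool) (t : List Bool) (k : ℕ) :
    (a :: b :: t).getD (k+2) false = t.getD k false := rfl

theorem bool_ne {a b : Bool} (h : ¬ a = b) : b = !a := by cases a <;> cases b <;> simp_all

theorem mu_demu : ∀ (l : List Bool), Even l.length →
    (∀ j, 2*j+1 < l.length → l.getD (2*j+1) false = !(l.getD (2*j) false)) →
    mu (demu l) = l
  | [] => by intros; rfl
  | [a] => by
    rintro ⟨k, hk⟩ _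
    simp at hk
    omega
  | a :: b :: t => by
    intro he hadj
    have hb : b = !a := by
      have := hadj 0 (by simp)
      simpa using this
    have het : Even t.length := by
      rcases he with ⟨k, hk⟩
      simp at hk
      exact ⟨k-1, by omega⟩
    have hat : ∀ j, 2*j+1 < t.length → t.getD (2*j+1) false = !(t.getD (2*j) false) := by
      intro j hj
      have h2 := hadj (j+1) (by simp; omega)
      rw [show 2*(j+1)+1 = (2*j+1)+2 by ring, show 2*(j+1) = (2*j)+2 by ring,
        getD_cons2, getD_cons2] at h2
      exact h2
    show mu (a :: demu t) = _
    rw [mu_cons, mu_demu t het hat, hb]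

theorem bool_ne' {a b : Bool} (h : ¬ a = b) : a = !b := by cases a <;> cases b <;> simp_all

def halfBases : List (List Bool) :=
  [[false], [true], [false, true, false], [true, false, true]]

theorem forwardAux : ∀ (n : ℕ) (x : List Bool), x.length = n → x ≠ [] →
    OverlapFree (x ++ x) →
    ∃ i c, c ∈ halfBases ∧ (mu^[i] c) ~r x := by
  intro n
  induction n using Nat.strong_induction_on with
  | _ n IH =>
  intro x hlen hne hof
  rcases le_or_gt n 5 with hn6 | hn6'
  · subst hlen
    rcases x with _ | ⟨a, _ | ⟨b, _ | ⟨c1, _ | ⟨d, _ | ⟨e, _ | ⟨f1, t⟩⟩⟩⟩⟩⟩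
    · exact absurd rfl hne
    · cases a <;>
      first
      | exact absurd ((overlapFree_iff_chk _).mp hof) (by decide)
      | exact ⟨0, [false], by decide, 0, by decide⟩
      | exact ⟨0, [true], by decide, 0, by decide⟩
      | exact ⟨1, [false], by decide, 0, by decide⟩
      | exact ⟨1, [true], by decide, 0, by decide⟩
      | exact ⟨0, [false,true,false], by decide, 0, by decide⟩
      | exact ⟨0, [false,true,false], by decide, 1, by decide⟩
      | exact ⟨0, [false,true,false], by decide, 2, by decide⟩
      | exact ⟨0, [true,false,true], by decide, 0, by decide⟩
      | exact ⟨0, [true,false,true], by decide, 1, by decide⟩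
      | exact ⟨0, [true,false,true], by decide, 2, by decide⟩
      | exact ⟨2, [false], by decide, 0, by decide⟩
      | exact ⟨2, [true], by decide, 0, by decide⟩
      | exact ⟨2, [false], by decide, 1, by decide⟩
      | exact ⟨2, [false], by decide, 3, by decide⟩
    · cases a <;> cases b <;>
      first
      | exact absurd ((overlapFree_iff_chk _).mp hof) (by decide)
      | exact ⟨0, [false], by decide, 0, by decide⟩
      | exact ⟨0, [true], by decide, 0, by decide⟩
      | exact ⟨1, [false], by decide, 0, by decide⟩
      | exact ⟨1, [true], by decide, 0, by decide⟩
      | exact ⟨0, [false,true,false], by decide, 0, by decide⟩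
      | exact ⟨0, [false,true,false], by decide, 1, by decide⟩
      | exact ⟨0, [false,true,false], by decide, 2, by decide⟩
      | exact ⟨0, [true,false,true], by decide, 0, by decide⟩
      | exact ⟨0, [true,false,true], by decide, 1, by decide⟩
      | exact ⟨0, [true,false,true], by decide, 2, by decide⟩
      | exact ⟨2, [false], by decide, 0, by decide⟩
      | exact ⟨2, [true], by decide, 0, by decide⟩
      | exact ⟨2, [false], by decide, 1, by decide⟩
      | exact ⟨2, [false], by decide, 3, by decide⟩
    · cases a <;> cases b <;> cases c1 <;>
      first
      | exact absurd ((overlapFree_iff_chk _).mp hof) (by decide)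
      | exact ⟨0, [false], by decide, 0, by decide⟩
      | exact ⟨0, [true], by decide, 0, by decide⟩
      | exact ⟨1, [false], by decide, 0, by decide⟩
      | exact ⟨1, [true], by decide, 0, by decide⟩
      | exact ⟨0, [false,true,false], by decide, 0, by decide⟩
      | exact ⟨0, [false,true,false], by decide, 1, by decide⟩
      | exact ⟨0, [false,true,false], by decide, 2, by decide⟩
      | exact ⟨0, [true,false,true], by decide, 0, by decide⟩
      | exact ⟨0, [true,false,true], by decide, 1, by decide⟩
      | exact ⟨0, [true,false,true], by decide, 2, by decide⟩
      | exact ⟨2, [false], by decide, 0, by decide⟩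
      | exact ⟨2, [true], by decide, 0, by decide⟩
      | exact ⟨2, [false], by decide, 1, by decide⟩
      | exact ⟨2, [false], by decide, 3, by decide⟩
    · cases a <;> cases b <;> cases c1 <;> cases d <;>
      first
      | exact absurd ((overlapFree_iff_chk _).mp hof) (by decide)
      | exact ⟨0, [false], by decide, 0, by decide⟩
      | exact ⟨0, [true], by decide, 0, by decide⟩
      | exact ⟨1, [false], by decide, 0, by decide⟩
      | exact ⟨1, [true], by decide, 0, by decide⟩
      | exact ⟨0, [false,true,false], by decide, 0, by decide⟩
      | exact ⟨0, [false,true,false], by decide, 1, by decide⟩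
      | exact ⟨0, [false,true,false], by decide, 2, by decide⟩
      | exact ⟨0, [true,false,true], by decide, 0, by decide⟩
      | exact ⟨0, [true,false,true], by decide, 1, by decide⟩
      | exact ⟨0, [true,false,true], by decide, 2, by decide⟩
      | exact ⟨2, [false], by decide, 0, by decide⟩
      | exact ⟨2, [true], by decide, 0, by decide⟩
      | exact ⟨2, [false], by decide, 1, by decide⟩
      | exact ⟨2, [false], by decide, 3, by decide⟩
    · cases a <;> cases b <;> cases c1 <;> cases d <;> cases e <;>
      first
      | exact absurd ((overlapFree_iff_chk _).mp hof) (by decide)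
      | exact ⟨0, [false], by decide, 0, by decide⟩
      | exact ⟨0, [true], by decide, 0, by decide⟩
      | exact ⟨1, [false], by decide, 0, by decide⟩
      | exact ⟨1, [true], by decide, 0, by decide⟩
      | exact ⟨0, [false,true,false], by decide, 0, by decide⟩
      | exact ⟨0, [false,true,false], by decide, 1, by decide⟩
      | exact ⟨0, [false,true,false], by decide, 2, by decide⟩
      | exact ⟨0, [true,false,true], by decide, 0, by decide⟩
      | exact ⟨0, [true,false,true], by decide, 1, by decide⟩
      | exact ⟨0, [true,false,true], by decide, 2, by decide⟩
      | exact ⟨2, [false], by decide, 0, by decide⟩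
      | exact ⟨2, [true], by decide, 0, by decide⟩
      | exact ⟨2, [false], by decide, 1, by decide⟩
      | exact ⟨2, [false], by decide, 3, by decide⟩
    · exfalso
      simp only [length_cons] at hn6
      omega
  have hn6 : 6 ≤ n := by omega
  clear hn6'
  have hnov : ¬ HasOv (x ++ x) := (overlapFree_iff_hasOv _).mp hof
  set c : ℕ → Bool := fun i => x.getD (i % n) false with hc
  have hn0 : 0 < n := by omega
  have hL0 : ∀ i, i < 2*n → (x ++ x).getD i false = c i := by
    intro i hi
    rcases lt_or_ge i n with h | h
    · rw [getD_append _ _ _ _ (by omega), hc]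
      simp only
      rw [Nat.mod_eq_of_lt h]
    · rw [getD_append_right _ _ _ _ (by omega), hc]
      simp only
      congr 1
      rw [Nat.mod_eq_sub_mod h, Nat.mod_eq_of_lt (by omega), hlen]
  have hW : ∀ s p, 1 ≤ p → 2*p ≤ n → (∀ i, i ≤ p → c (s+i) = c (s+i+p)) → False := by
    intro s p hp h2p hper
    have hsm : s % n < n := Nat.mod_lt _ hn0
    apply hnov
    refine ⟨s % n, p, hp, by rw [length_append, hlen]; omega, ?_⟩
    intro i hi
    have key : ∀ k, c (s % n + k) = c (s + k) := by
      intro k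
      simp only [hc]
      congr 1
      have hs := Nat.mod_add_div s n
      rw [show s + k = s % n + k + n * (s / n) by omega, Nat.add_mul_mod_self_left]
    rw [hL0 _ (by omega), hL0 _ (by omega), key i,
      show s % n + i + p = s % n + (i+p) by omega, key (i+p),
      show s + (i+p) = s + i + p by omega]
    exact hper i hi
  have hcp : ∀ i, c (i + n) = c i := by
    intro i
    simp only [hc]
    congr 1
    exact Nat.add_mod_right i n
  have L3 : ∀ i, c i = c (i+1) → c (i+1) = c (i+2) → False := by
    intro i h1 h2
    refine hW i 1 le_rfl (by omega) ?_
    intro j hj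
    interval_cases j
    · simpa using h1
    · rw [show i+1+1 = i+2 by omega]
      exact h2
  have L5 : ∀ i, c i = c (i+1) ∨ c (i+1) = c (i+2) ∨ c (i+2) = c (i+3) ∨ c (i+3) = c (i+4) := by
    intro i
    by_contra hcon
    push_neg at hcon
    obtain ⟨h0, h1, h2, h3⟩ := hcon
    have a0 : c (i+1) = !(c i) := bool_ne h0
    have a1 : c (i+2) = !(c (i+1)) := bool_ne h1
    have a2 : c (i+3) = !(c (i+2)) := bool_ne h2
    have a3 : c (i+4) = !(c (i+3)) := bool_ne h3
    refine hW i 2 (by omega) (by omega) ?_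
    intro j hj
    interval_cases j
    · rw [show i+0 = i by omega, show i+0+2 = i+2 by omega, a1, a0, Bool.not_not]
    · rw [show i+1+2 = i+3 by omega, a2, a1, Bool.not_not]
    · rw [show i+2+2 = i+4 by omega, a3, a2, Bool.not_not]
  have L4 : ∀ i, c i = c (i+1) → c (i+3) = c (i+4) → False := by
    have core : ∀ s, c (s+1) = c (s+2) → c (s+4) = c (s+5) → False := by
      intro s hDi hD3
      have hn1 : ¬ (c (s+2) = c (s+3)) := fun h =>
        L3 (s+1) (by rw [show s+1+1 = s+2 by omega]; exact hDi)
          (by rw [show s+1+1 = s+2 by omega, show s+1+2 = s+3 by omega]; exact h)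
      have hn2 : ¬ (c (s+3) = c (s+4)) := fun h =>
        L3 (s+3) (by rw [show s+3+1 = s+4 by omega]; exact h)
          (by rw [show s+3+1 = s+4 by omega, show s+3+2 = s+5 by omega]; exact hD3)
      have hn4 : ¬ (c (s+5) = c (s+6)) := fun h =>
        L3 (s+4) (by rw [show s+4+1 = s+5 by omega]; exact hD3)
          (by rw [show s+4+1 = s+5 by omega, show s+4+2 = s+6 by omega]; exact h)
      have hn0 : ¬ (c s = c (s+1)) := fun h => L3 s h hDi
      have e0 : c s = !(c (s+1)) := bool_ne' hn0
      have e2 : c (s+2) = c (s+1) := hDi.symm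
      have e3 : c (s+3) = !(c (s+2)) := bool_ne hn1
      have e4 : c (s+4) = !(c (s+3)) := bool_ne hn2
      have e5 : c (s+5) = c (s+4) := hD3.symm
      have e6 : c (s+6) = !(c (s+5)) := bool_ne hn4
      refine hW s 3 (by omega) (by omega) ?_
      intro j hj
      have hj4 : j = 0 ∨ j = 1 ∨ j = 2 ∨ j = 3 := by omega
      rcases hj4 with rfl | rfl | rfl | rfl
      · rw [show s+0 = s by omega, show s+0+3 = s+3 by omega, e0, e3, e2]
      · rw [show s+1+3 = s+4 by omega, e4, e3, e2, Bool.not_not]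
      · rw [show s+2+3 = s+5 by omega, e5, e4, e3, Bool.not_not]
      · rw [show s+3+3 = s+6 by omega, e6, e5, e4, Bool.not_not]
    intro i hDi hD3
    apply core (i+n-1)
    · rw [show i+n-1+1 = i+n by omega, show i+n-1+2 = (i+1)+n by omega, hcp, hcp]
      exact hDi
    · rw [show i+n-1+4 = (i+3)+n by omega, show i+n-1+5 = (i+4)+n by omega, hcp, hcp]
      exact hD3
  have claim : ∀ k i j, c i = c (i+1) → c j = c (j+1) → j = i + k → k % 2 = 0 := by
    intro k
    induction k using Nat.strong_induction_on with
    | _ k ihk =>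
    intro i j hdi hdj hij
    by_cases hk4 : 4 ≤ k
    · have h5 : c (i+1) = c (i+2) ∨ c (i+2) = c (i+3) ∨ c (i+3) = c (i+4) ∨ c (i+4) = c (i+5) := by
        have := L5 (i+1)
        rw [show i+1+1 = i+2 by omega, show i+1+2 = i+3 by omega, show i+1+3 = i+4 by omega,
          show i+1+4 = i+5 by omega] at this
        exact this
      rcases h5 with h | h | h | h
      · exact absurd h (fun hh => L3 i hdi hh)
      · have := ihk (k-2) (by omega) (i+2) j
          (by rw [show i+2+1 = i+3 by omega]; exact h) hdj (by omega)
        omega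
      · exact (L4 i hdi (by rw [show i+3+1 = i+4 by omega]; exact h)).elim
      · have := ihk (k-4) (by omega) (i+4) j
          (by rw [show i+4+1 = i+5 by omega]; exact h) hdj (by omega)
        omega
    · have hk : k = 0 ∨ k = 1 ∨ k = 2 ∨ k = 3 := by omega
      rcases hk with rfl | rfl | rfl | rfl
      · rfl
      · subst hij
        exact (L3 i hdi (by rw [show i+2 = i+1+1 by omega]; exact hdj)).elim
      · rfl
      · subst hij
        exact (L4 i hdi (by rw [show i+4 = i+3+1 by omega]; exact hdj)).elim
  obtain ⟨i0, hD0⟩ : ∃ i, c i = c (i+1) := by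
    rcases L5 0 with h | h | h | h
    exacts [⟨0, h⟩, ⟨0+1, h⟩, ⟨0+2, h⟩, ⟨0+3, h⟩]
  have hD0n : c (i0+n) = c (i0+n+1) := by
    rw [show i0+n+1 = (i0+1)+n by omega, hcp, hcp]
    exact hD0
  have hneven : n % 2 = 0 := claim n i0 (i0 + n) hD0 hD0n (by omega)
  have alld : ∀ j, c j = c (j+1) → j % 2 = i0 % 2 := by
    intro j hdj
    rcases le_total i0 j with h | h
    · have := claim (j - i0) i0 j hD0 hdj (by omega); omega
    · have := claim (i0 - j) j i0 hdj hD0 (by omega); omega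
  set δ := (1 + i0) % 2 with hδ
  have hδ2 : δ < 2 := Nat.mod_lt _ (by omega)
  have hndd : ∀ j, ¬ (c (2*j + δ) = c (2*j + δ + 1)) := by
    intro j hd
    have h1 := alld _ hd
    omega
  set x' := x.rotate δ with hx'
  have hx'l : x'.length = n := by rw [hx', length_rotate, hlen]
  have rotget : ∀ j, j < n → x'.getD j false = c (j + δ) := by
    intro j hj
    have hδn : δ ≤ x.length := by omega
    rw [hx', rotate_eq_drop_append_take hδn]
    rcases lt_or_ge j (n - δ) with h | h
    · rw [getD_append _ _ _ _ (by rw [length_drop]; omega),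
        getD_eq_getElem _ _ (by rw [length_drop]; omega), getElem_drop,
        ← getD_eq_getElem _ false (by omega)]
      simp only [hc]
      rw [Nat.mod_eq_of_lt (by omega), Nat.add_comm δ j]
    · rw [getD_append_right _ _ _ _ (by rw [length_drop]; omega),
        getD_eq_getElem _ _ (by rw [length_take, length_drop]; omega), getElem_take,
        ← getD_eq_getElem _ false (by rw [length_drop] at *; omega)]
      simp only [hc]
      congr 1
      rw [length_drop, hlen, Nat.mod_eq_sub_mod (by omega), Nat.mod_eq_of_lt (by omega)]
      omega
  have hadj : ∀ j, 2*j+1 < n → x'.getD (2*j+1) false = !(x'.getD (2*j) false) := by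
    intro j hj
    rw [rotget _ hj, rotget _ (by omega)]
    have h2 := bool_ne (hndd j)
    rw [show 2*j+1+δ = 2*j+δ+1 by omega]
    exact h2
  have hevenx' : Even x'.length := by rw [hx'l]; exact ⟨n/2, by omega⟩
  have hmu : mu (demu x') = x' :=
    mu_demu x' hevenx' (fun j hj => hadj j (by rw [hx'l] at hj; exact hj))
  set y := demu x' with hy
  have hylen : 2 * y.length = n := by
    have h3 := congrArg List.length hmu
    rw [mu_length] at h3
    rw [h3, hx'l]
  have hyne : y ≠ [] := by
    intro h
    rw [h] at hylen
    simp at hylen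
    omega
  have hyyof : OverlapFree (y ++ y) := by
    rw [overlapFree_iff_not_hasOverlap]
    rintro ⟨f, hinf, hovf⟩
    obtain ⟨g, b, hg, hginf⟩ := ov_lift hovf hinf
    have hmuyy : mu (y ++ y) = x' ++ x' := by rw [mu_append, hmu]
    rcases Nat.eq_zero_or_pos δ with h0 | h1
    · have hx0 : x' = x := by rw [hx', h0, rotate_zero]
      refine hof g ?_ hg
      have h4 : g <:+: mu (y ++ y) := IsInfix.trans ⟨[], [b], by simp⟩ hginf
      rw [hmuyy, hx0] at h4
      exact h4
    · have hδ1 : δ = 1 := by omega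
      obtain ⟨hd, x0, hxd⟩ := List.exists_cons_of_ne_nil hne
      have hr1 : x' ++ x' = (x0 ++ x) ++ [hd] := by
        rw [hx', hδ1, ← sq_rotate (show 1 ≤ x.length by omega)]
        conv_lhs => rw [hxd, show (hd :: x0) ++ (hd :: x0) = hd :: (x0 ++ (hd :: x0)) from rfl,
          rotate_cons_succ, rotate_zero]
        rw [← hxd]
      have hgd : g <:+: ((x0 ++ x) ++ [hd]).dropLast :=
        dropLast_infix (by rw [← hr1, ← hmuyy]; exact hginf)
      rw [dropLast_concat] at hgd
      refine hof g ?_ hg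
      exact hgd.trans ⟨[hd], [], by rw [hxd]; simp⟩
  obtain ⟨iy, cy, hcy, hry⟩ := IH y.length (by omega) y rfl hyne hyyof
  refine ⟨iy + 1, cy, hcy, ?_⟩
  rw [Function.iterate_succ_apply']
  have hxx' : x ~r x' := ⟨δ, hx'.symm⟩
  exact (mu_isRotated hry).trans (hmu ▸ hxx'.symm)

theorem mu_iter_append (i : ℕ) (a b : List Bool) :
    mu^[i] (a ++ b) = mu^[i] a ++ mu^[i] b := by
  induction i with
  | zero => simp
  | succ i ih => rw [Function.iterate_succ_apply', Function.iterate_succ_apply',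
      Function.iterate_succ_apply', ih, mu_append]

theorem sq_part (i : ℕ) (u v c : List Bool) (hc : c ≠ [])
    (hbv : mu^[i] (c ++ c) = u ++ v) : ∃ x, x ≠ [] ∧ v ++ u = x ++ x := by
  have h1 : (mu^[i] (c ++ c)).rotate u.length = v ++ u := rot_decomp hbv.symm
  rw [mu_iter_append] at h1
  obtain ⟨z, hz, hzl⟩ := sq_rotate_any (mu^[i] c) u.length
  refine ⟨z, ?_, by rw [← h1, hz]⟩
  intro h0
  rw [h0] at hzl
  simp at hzl
  exact (iter_mu_ne_nil hc i) (length_eq_zero_iff.mp hzl.symm)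

theorem stmt_5 (w : List Bool) :
    (OverlapFree w ∧ ∃ x : List Bool, x ≠ [] ∧ w = x ++ x) ↔
      ∃ (i : ℕ) (x : List Bool),
        x ∈ [[false, false], [true, true],
              [false, true, false, false, true, false],
              [true, false, true, true, false, true]] ∧
        ∃ u v : List Bool, mu^[i] x = u ++ v ∧ w = v ++ u := by
  constructor
  · rintro ⟨hof, x, hne, rfl⟩
    obtain ⟨i, c, hc, hr⟩ := forwardAux x.length x rfl hne hof
    obtain ⟨u, v, hsc, hx⟩ := isRotated_decomp hr
    refine ⟨i, c ++ c, ?_, u, v ++ u ++ v, ?_, ?_⟩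
    · fin_cases hc <;> decide
    · rw [mu_iter_append, hsc]
      simp [List.append_assoc]
    · rw [hx]
      simp [List.append_assoc]
  · rintro ⟨i, b, hb, u, v, hbv, rfl⟩
    constructor
    · have h1 : (mu^[i] b).rotate u.length = v ++ u := rot_decomp hbv.symm
      rw [← h1]
      exact basesRot i b (by simpa [bases] using hb) u.length
    · fin_cases hb
      · exact sq_part i u v [false] (by decide) hbv
      · exact sq_part i u v [true] (by decide) hbv
      · exact sq_part i u v [false, true, false] (by decide) hbv
      · exact sq_part i u v [true, false, true] (by decide) hbv
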